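/- arXiv:2511.04416 — 2 statements merged into one kernel-verified Lean document; each statement's English description precedes it below -/
import Mathlib

section
/- Let H be a Hilbert space, V a closed subspace with orthogonal projection P_V, and W a closed subspace such that V ⊕ W^⊥ = H. Then P_V P_W P_V restricted to V (i.e. the compression of P_W to V) is an invertible operator on V. -/
set_option maxHeartbeats 1000000

open Submodule ContinuousLinearMap NNReal

/-- If `V`, `W` are closed subspaces of a Hilbert space `H` with `V ⊕ W^⊥ = H`,
then the compression `x ↦ P_V (P_W x)` of `P_W` to `V` is an isomorphism of `V`
(a continuous linear bijection, hence a Banach space isomorphism). -/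
theorem compression_bijective (H : Type*) [NormedAddCommGroup H] [InnerProductSpace ℂ H]
    [CompleteSpace H] (V W : Submodule ℂ H)
    (hV : IsClosed (V : Set H)) (hW : IsClosed (W : Set H))
    (hcompl : IsCompl V Wᗮ) :
    letI : CompleteSpace V := hV.completeSpace_coe
    letI : CompleteSpace W := hW.completeSpace_coe
    Function.Bijective
      (fun x : V => orthogonalProjection V ((orthogonalProjection W (x : H) : W) : H)) := by
  letI : CompleteSpace V := hV.completeSpace_coe
  letI : CompleteSpace W := hW.completeSpace_coe
  set T : V →L[ℂ] V :=
    (orthogonalProjection V).comp ((W.subtypeL).comp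
      ((orthogonalProjection W).comp V.subtypeL)) with hTdef
  have hTapp : ∀ x : V,
      T x = orthogonalProjection V ((orthogonalProjection W (x : H) : W) : H) := fun _ => rfl
  -- the bounded projection onto V along Wᗮ
  have hWo : IsClosed ((Wᗮ : Submodule ℂ H) : Set H) := W.isClosed_orthogonal
  set Q : H →L[ℂ] V := V.linearProjOfClosedCompl Wᗮ hcompl hV hWo with hQdef
  have hQV : ∀ x : V, Q (x : H) = x := fun x => by
    simpa [hQdef, Submodule.coe_continuous_linearProjOfClosedCompl'] using
      Submodule.linearProjOfIsCompl_apply_left hcompl x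
  have hQWo : ∀ z : H, z ∈ Wᗮ → Q z = 0 := fun z hz => by
    simpa [hQdef, Submodule.coe_continuous_linearProjOfClosedCompl'] using
      Submodule.linearProjOfIsCompl_apply_right hcompl ⟨z, hz⟩
  -- key: for x ∈ V, Q (P_W x) = x
  have key : ∀ x : V, Q ((orthogonalProjection W (x : H) : W) : H) = x := by
    intro x
    have h1 : (x : H) - orthogonalProjection W (x : H) ∈ Wᗮ :=
      sub_starProjection_mem_orthogonal (K := W) (x : H)
    have h2 : Q ((x : H) - orthogonalProjection W (x : H)) = 0 := hQWo _ h1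
    have h3 : Q (x : H) - Q ((orthogonalProjection W (x : H) : W) : H) = 0 := by
      rw [← map_sub]; exact h2
    have := hQV x
    rw [sub_eq_zero] at h3
    rw [← h3, this]
  -- norm bound: ‖x‖ ≤ ‖Q‖ * ‖P_W x‖
  have lower : ∀ x : V, ‖x‖ ≤ ‖Q‖ * ‖((orthogonalProjection W (x : H) : W) : H)‖ := by
    intro x
    calc ‖x‖ = ‖Q ((orthogonalProjection W (x : H) : W) : H)‖ := by rw [key x]
    _ ≤ ‖Q‖ * ‖((orthogonalProjection W (x : H) : W) : H)‖ := Q.le_opNorm _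
  -- inner product identity: ⟪x, T x⟫ = ‖P_W x‖²
  have hinner : ∀ x : V,
      (inner ℂ x (T x) : ℂ) = (‖((orthogonalProjection W (x : H) : W) : H)‖ : ℂ) ^ 2 := by
    intro x
    rw [hTapp x]
    rw [show (inner ℂ x (orthogonalProjection V ((orthogonalProjection W (x : H) : W) : H)) : ℂ)
        = inner ℂ (x : H) ((orthogonalProjection W (x : H) : W) : H) from
      inner_orthogonalProjectionOnto_eq_of_mem_left (K := V) x _]
    have h5 : (inner ℂ ((x : H) - ((orthogonalProjection W (x : H) : W) : H))
        ((orthogonalProjection W (x : H) : W) : H) : ℂ) = 0 :=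
      starProjection_inner_eq_zero (x : H) _ (Submodule.coe_mem _)
    rw [inner_sub_left, sub_eq_zero] at h5
    rw [h5, inner_self_eq_norm_sq_to_K]
    norm_cast
  -- P_W x = 0 → x = 0
  have hPW0 : ∀ x : V, ((orthogonalProjection W (x : H) : W) : H) = 0 → x = 0 := by
    intro x hx
    have := key x
    rw [hx, map_zero] at this
    exact this.symm
  -- antilipschitz bound: ‖x‖ ≤ ‖Q‖² * ‖T x‖
  have bound : ∀ x : V, ‖x‖ ≤ (‖Q‖₊ * ‖Q‖₊ : ℝ≥0) * ‖T x‖ := by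
    intro x
    rcases eq_or_ne x 0 with rfl | hx
    · simp
    · have hxpos : (0 : ℝ) < ‖x‖ := norm_pos_iff.mpr hx
      set n := ‖((orthogonalProjection W (x : H) : W) : H)‖ with hn
      have h1 : ‖x‖ ≤ ‖Q‖ * n := lower x
      have h2 : n ^ 2 ≤ ‖x‖ * ‖T x‖ := by
        have hb : n ^ 2 = ‖(inner ℂ x (T x) : ℂ)‖ := by
          rw [hinner x, norm_pow, Complex.norm_real, Real.norm_eq_abs,
            abs_of_nonneg (norm_nonneg _)]
        rw [hb]; exact norm_inner_le_norm _ _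
      have hQnn : (0 : ℝ) ≤ ‖Q‖ := Q.opNorm_nonneg
      have h3 : ‖x‖ ^ 2 ≤ ‖Q‖ ^ 2 * (‖x‖ * ‖T x‖) := by
        calc ‖x‖ ^ 2 ≤ (‖Q‖ * n) ^ 2 := by
              apply pow_le_pow_left₀ (norm_nonneg _) h1
        _ = ‖Q‖ ^ 2 * n ^ 2 := by ring
        _ ≤ ‖Q‖ ^ 2 * (‖x‖ * ‖T x‖) := by
              apply mul_le_mul_of_nonneg_left h2 (sq_nonneg _)
      have h4 : ‖x‖ * ‖x‖ ≤ (‖Q‖ ^ 2 * ‖T x‖) * ‖x‖ := by nlinarith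
      have h5 : ‖x‖ ≤ ‖Q‖ ^ 2 * ‖T x‖ := le_of_mul_le_mul_right (by nlinarith) hxpos
      calc ‖x‖ ≤ ‖Q‖ ^ 2 * ‖T x‖ := h5
      _ = (‖Q‖₊ * ‖Q‖₊ : ℝ≥0) * ‖T x‖ := by
            have : ((‖Q‖₊ * ‖Q‖₊ : ℝ≥0) : ℝ) = ‖Q‖ ^ 2 := by
              push_cast [sq, coe_nnnorm]
              ring
            rw [this]
  have hanti : AntilipschitzWith (‖Q‖₊ * ‖Q‖₊) T := T.antilipschitz_of_bound bound
  -- injectivity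
  have hinj : Function.Injective T := hanti.injective
  -- range is closed
  have hclosed : IsClosed (Set.range T) := hanti.isClosed_range T.uniformContinuous
  have hrange_closed : IsClosed ((LinearMap.range (T : V →ₗ[ℂ] V) : Submodule ℂ V) : Set V) := by
    have : ((LinearMap.range (T : V →ₗ[ℂ] V) : Submodule ℂ V) : Set V) = Set.range T := by
      ext y; simp [LinearMap.mem_range]
    rw [this]; exact hclosed
  haveI : CompleteSpace (LinearMap.range (T : V →ₗ[ℂ] V) : Submodule ℂ V) := hrange_closed.completeSpace_coe
  -- range is dense: its orthogonal complement is trivial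
  have horth : (LinearMap.range (T : V →ₗ[ℂ] V) : Submodule ℂ V)ᗮ = ⊥ := by
    rw [Submodule.eq_bot_iff]
    intro y hy
    have h1 : (inner ℂ (T y) y : ℂ) = 0 := hy (T y) (LinearMap.mem_range_self _ y)
    have h2 : (inner ℂ y (T y) : ℂ) = 0 := by
      rw [← inner_conj_symm, h1, map_zero]
    have h3 := hinner y
    rw [h2] at h3
    have h4 : ‖((orthogonalProjection W (y : H) : W) : H)‖ = 0 := by
      have h5 : (‖((orthogonalProjection W (y : H) : W) : H)‖ : ℝ) ^ 2 = 0 := by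
        exact_mod_cast h3.symm
      exact pow_eq_zero_iff two_ne_zero |>.mp h5
    exact hPW0 y (norm_eq_zero.mp h4)
  have hrange_top : (LinearMap.range (T : V →ₗ[ℂ] V) : Submodule ℂ V) = ⊤ :=
    Submodule.orthogonal_eq_bot_iff.mp horth
  have hsurj : Function.Surjective T := LinearMap.range_eq_top.mp hrange_top
  have hfun : (fun x : V =>
      orthogonalProjection V ((orthogonalProjection W (x : H) : W) : H)) = ⇑T := by
    funext x
    exact (hTapp x).symm
  show Function.Bijective
    (fun x : V => orthogonalProjection V ((orthogonalProjection W (x : H) : W) : H))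
  rw [hfun]
  exact ⟨hinj, hsurj⟩
end

section
/- If E is a Banach space and F, G, G' are closed subspaces with F ⊕ G = E and F ⊕ G' = E, then for every closed subspace H with H ⊕ G = E and H ⊕ G' = E, the operator π_{G'}(F)(1 + A) : F → F is invertible, where A = φ_{F,G}(H) is the operator whose graph is H and π_{G'}(F) is the projection onto F along G'. -/
/-- Let `E` be a Banach space with closed subspaces `F`, `G`, `G'` such that
`F ⊕ G = E` and `F ⊕ G' = E`.  Let `H` be a closed subspace complementary to both `G`
and `G'`, and let `A : F → G` be the (unique) bounded operator whose graph is `H`, i.e.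
`H = {x + A x : x ∈ F}`.  If `π : E → F` is the bounded projection onto `F` along `G'`
(that is, `π = id` on `F` and `π = 0` on `G'`), then the operator
`x ↦ π (x + A x) : F → F` (i.e. `π_{G'}(F)(1 + A)`) is invertible (a continuous linear
bijection, hence an isomorphism of `F`). -/
theorem transition_operator_bijective (E : Type*) [NormedAddCommGroup E] [NormedSpace ℂ E]
    [CompleteSpace E] (F G G' H : Submodule ℂ E)
    (hF : IsClosed (F : Set E)) (hG : IsClosed (G : Set E)) (hG' : IsClosed (G' : Set E))
    (hH : IsClosed (H : Set E))
    (hFG : IsCompl F G) (hFG' : IsCompl F G') (hHG : IsCompl H G) (hHG' : IsCompl H G')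
    (A : F →L[ℂ] G)
    (hA : (H : Set E) = Set.range (fun x : F => (x : E) + ((A x : G) : E)))
    (π : E →L[ℂ] F) (hπF : ∀ x : F, π (x : E) = x) (hπG' : ∀ y : G', π (y : E) = 0) :
    Function.Bijective (fun x : F => π ((x : E) + ((A x : G) : E))) := by
  -- kernel of π is contained in G'
  have hker : ∀ z : E, π z = 0 → z ∈ G' := by
    intro z hz
    have hz' : z ∈ F ⊔ G' := by rw [hFG'.sup_eq_top]; trivial
    rcases Submodule.mem_sup.1 hz' with ⟨f, hf, g, hg, rfl⟩
    have : π (f + g) = ⟨f, hf⟩ := by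
      rw [map_add, hπF ⟨f, hf⟩, hπG' ⟨g, hg⟩, add_zero]
    rw [hz] at this
    have hf0 : f = 0 := by
      have := congrArg (Subtype.val) this.symm
      simpa using this
    simpa [hf0] using hg
  constructor
  · intro x y hxy
    simp only at hxy
    set h1 : E := (x : E) + ((A x : G) : E)
    set h2 : E := (y : E) + ((A y : G) : E)
    have hh1 : h1 ∈ H := by
      have : h1 ∈ (H : Set E) := by rw [hA]; exact ⟨x, rfl⟩
      exact this
    have hh2 : h2 ∈ H := by
      have : h2 ∈ (H : Set E) := by rw [hA]; exact ⟨y, rfl⟩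
      exact this
    have hdG' : h1 - h2 ∈ G' := hker _ (by rw [map_sub, hxy, sub_self])
    have hdH : h1 - h2 ∈ H := sub_mem hh1 hh2
    have h12 : h1 = h2 := by
      have : h1 - h2 ∈ H ⊓ G' := ⟨hdH, hdG'⟩
      rw [hHG'.inf_eq_bot, Submodule.mem_bot] at this
      exact sub_eq_zero.1 this
    -- from h1 = h2 deduce x = y using F ⊓ G = ⊥
    have hd : (x : E) - (y : E) = ((A y : G) : E) - ((A x : G) : E) := by
      have h' : (x : E) + ((A x : G) : E) = (y : E) + ((A y : G) : E) := h12
      exact sub_eq_sub_iff_add_eq_add.2 (by rw [h', add_comm])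
    have hmem : (x : E) - (y : E) ∈ F ⊓ G := by
      refine ⟨sub_mem x.2 y.2, ?_⟩
      rw [hd]; exact sub_mem (A y).2 (A x).2
    rw [hFG.inf_eq_bot, Submodule.mem_bot, sub_eq_zero] at hmem
    exact Subtype.ext hmem
  · intro f
    have hf' : (f : E) ∈ H ⊔ G' := by rw [hHG'.sup_eq_top]; trivial
    rcases Submodule.mem_sup.1 hf' with ⟨h, hh, g, hg, hsum⟩
    have hh2 : h ∈ (H : Set E) := hh
    rw [hA] at hh2
    rcases hh2 with ⟨x, hx⟩
    refine ⟨x, ?_⟩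
    simp only
    simp only at hx
    rw [hx]
    have hh' : h = (f : E) - g := eq_sub_of_add_eq hsum
    rw [hh', map_sub, hπF f, hπG' ⟨g, hg⟩, sub_zero]
end
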